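/- Let F = [[K, M],[L, C−I]] on h ⊕ (h⊗k) satisfy the form inequality 2 Re⟨ξ, Fξ⟩ + ‖ΔFξ‖² ≤ 0 on D₀ ⊕ (D ⊗_alg D_k). Then D₀ ⊂ Dom M*, and for all u ∈ D₀: ‖(L + CM*)u‖² + ‖M*u‖² + 2 Re⟨u, Ku⟩ ≤ 0. In particular M* is K-bounded with relative bound 0: for every λ > 0, ‖M*u‖ ≤ λ‖Ku‖ + λ^{-1}‖u‖. -/

import Mathlib

open scoped InnerProductSpace

set_option maxHeartbeats 1000000 in
theorem block_form_inequality_adjoint_bound {h K2 : Type*}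
    [NormedAddCommGroup h] [InnerProductSpace ℂ h] [CompleteSpace h]
    [NormedAddCommGroup K2] [InnerProductSpace ℂ K2] [CompleteSpace K2]
    (D0 : Submodule ℂ h) (Dm : Submodule ℂ K2)
    (hD0 : Dense (D0 : Set h)) (hDm : Dense (Dm : Set K2))
    (K : D0 →ₗ[ℂ] h) (L : D0 →ₗ[ℂ] K2) (M : Dm →ₗ[ℂ] h) (C : Dm →ₗ[ℂ] K2)
    (hform : ∀ (u : D0) (η : Dm),
      2 * (⟪(u : h), K u + M η⟫_ℂ + ⟪(η : K2), L u + C η - (η : K2)⟫_ℂ).re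
        + ‖L u + C η - (η : K2)‖ ^ 2 ≤ 0) :
    (∀ u : D0, (u : h) ∈ (LinearPMap.adjoint (⟨Dm, M⟩ : K2 →ₗ.[ℂ] h)).domain) ∧
      ∃ Cbar : K2 →L[ℂ] K2, ‖Cbar‖ ≤ 1 ∧ (∀ η : Dm, Cbar (η : K2) = C η) ∧
        ∀ (u : D0) (hu : (u : h) ∈ (LinearPMap.adjoint (⟨Dm, M⟩ : K2 →ₗ.[ℂ] h)).domain),
          ‖L u + Cbar (LinearPMap.adjoint (⟨Dm, M⟩ : K2 →ₗ.[ℂ] h) ⟨(u : h), hu⟩)‖ ^ 2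
              + ‖LinearPMap.adjoint (⟨Dm, M⟩ : K2 →ₗ.[ℂ] h) ⟨(u : h), hu⟩‖ ^ 2
              + 2 * (⟪(u : h), K u⟫_ℂ).re ≤ 0 ∧
            ∀ lam : ℝ, 0 < lam →
              ‖LinearPMap.adjoint (⟨Dm, M⟩ : K2 →ₗ.[ℂ] h) ⟨(u : h), hu⟩‖ ≤
                lam * ‖K u‖ + lam⁻¹ * ‖(u : h)‖ := by
  classical
  -- the key polarized inequality
  have hstar : ∀ (u : D0) (η : Dm),
      2 * (⟪(u : h), K u⟫_ℂ).re + 2 * (⟪(u : h), M η⟫_ℂ).re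
        + ‖L u + C η‖ ^ 2 - ‖(η : K2)‖ ^ 2 ≤ 0 := by
    intro u η
    have h0 := hform u η
    have e1 : ‖L u + C η - (η : K2)‖ ^ 2
        = ‖L u + C η‖ ^ 2 - 2 * (⟪L u + C η, (η : K2)⟫_ℂ).re + ‖(η : K2)‖ ^ 2 := by
      exact @norm_sub_sq ℂ K2 _ _ _ (L u + C η) (η : K2)
    have e2 : (⟪(η : K2), L u + C η - (η : K2)⟫_ℂ).re
        = (⟪L u + C η, (η : K2)⟫_ℂ).re - ‖(η : K2)‖ ^ 2 := by
      rw [inner_sub_right, Complex.sub_re]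
      have s1 : (⟪(η : K2), L u + C η⟫_ℂ).re = (⟪L u + C η, (η : K2)⟫_ℂ).re := by
        exact @inner_re_symm ℂ K2 _ _ _ (η : K2) (L u + C η)
      have s2 : (⟪(η : K2), (η : K2)⟫_ℂ).re = ‖(η : K2)‖ ^ 2 := by
        simpa using @inner_self_eq_norm_sq ℂ K2 _ _ _ (η : K2)
      rw [s1, s2]
    have e3 : (⟪(u : h), K u + M η⟫_ℂ).re
        = (⟪(u : h), K u⟫_ℂ).re + (⟪(u : h), M η⟫_ℂ).re := by
      rw [inner_add_right, Complex.add_re]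
    rw [e1, Complex.add_re, e2, e3] at h0
    linarith
  -- nonnegativity of B u := -2 re ⟪u, Ku⟫, from η = 0
  have hB0 : ∀ u : D0, 2 * (⟪(u : h), K u⟫_ℂ).re ≤ 0 := by
    intro u
    have := hstar u 0
    simp only [map_zero, inner_zero_right, Complex.zero_re, mul_zero, add_zero,
      Submodule.coe_zero, norm_zero] at this
    nlinarith [sq_nonneg ‖L u + C (0 : Dm)‖]
  -- squared bound on the sesquilinear pairing
  have hsq : ∀ (u : D0) (η : Dm),
      ‖⟪(u : h), M η⟫_ℂ‖ ^ 2 ≤ (-(2 * (⟪(u : h), K u⟫_ℂ).re)) * ‖(η : K2)‖ ^ 2 := by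
    intro u η
    set c : ℂ := ⟪(u : h), M η⟫_ℂ with hc
    by_cases hc0 : c = 0
    · rw [hc0]
      have := hB0 u
      have hn : (0:ℝ) ≤ ‖(η : K2)‖ ^ 2 := sq_nonneg _
      simp only [norm_zero]
      nlinarith
    · have hη : (η : K2) ≠ 0 := by
        intro hz
        apply hc0
        have : η = 0 := Subtype.ext hz
        rw [hc, this, map_zero, inner_zero_right]
      have hnpos : (0:ℝ) < ‖(η : K2)‖ := norm_pos_iff.mpr hη
      set z : ℂ := (starRingEnd ℂ) c / ((‖(η : K2)‖ ^ 2 : ℝ) : ℂ) with hz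
      have hmain := hstar u (z • η)
      have hM : M (z • η) = z • M η := map_smul M z η
      have hcoe : ((z • η : Dm) : K2) = z • (η : K2) := rfl
      have hre : (⟪(u : h), M (z • η)⟫_ℂ).re = ‖c‖ ^ 2 / ‖(η : K2)‖ ^ 2 := by
        rw [hM, inner_smul_right, ← hc, hz, div_mul_eq_mul_div, RCLike.conj_mul]
        norm_cast
        simp [← Complex.ofReal_pow, Complex.div_ofReal_re]
      have hnrm : ‖((z • η : Dm) : K2)‖ = (‖c‖ / ‖(η : K2)‖ ^ 2) * ‖(η : K2)‖ := by
        rw [hcoe, norm_smul, hz, norm_div]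
        simp
      have hK := hB0 u
      rw [hre, hnrm] at hmain
      have hsq' : (‖c‖ / ‖(η : K2)‖ ^ 2 * ‖(η : K2)‖) ^ 2
          = ‖c‖ ^ 2 / ‖(η : K2)‖ ^ 2 := by
        field_simp
      rw [hsq'] at hmain
      have hpos2 : (0:ℝ) < ‖(η : K2)‖ ^ 2 := by positivity
      have hnn : (0:ℝ) ≤ ‖L u + C (z • η)‖ ^ 2 := sq_nonneg _
      have : ‖c‖ ^ 2 / ‖(η : K2)‖ ^ 2 ≤ -(2 * (⟪(u : h), K u⟫_ℂ).re) := by linarith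
      calc ‖c‖ ^ 2 = (‖c‖ ^ 2 / ‖(η : K2)‖ ^ 2) * ‖(η : K2)‖ ^ 2 := by field_simp
        _ ≤ (-(2 * (⟪(u : h), K u⟫_ℂ).re)) * ‖(η : K2)‖ ^ 2 := by
            apply mul_le_mul_of_nonneg_right this (le_of_lt hpos2)
  -- membership in the adjoint domain
  have hmem : ∀ u : D0, (u : h) ∈ (LinearPMap.adjoint (⟨Dm, M⟩ : K2 →ₗ.[ℂ] h)).domain := by
    intro u
    rw [LinearPMap.mem_adjoint_domain_iff]
    have hBnn : 0 ≤ -(2 * (⟪(u : h), K u⟫_ℂ).re) := by linarith [hB0 u]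
    apply AddMonoidHomClass.continuous_of_bound _ (Real.sqrt (-(2 * (⟪(u : h), K u⟫_ℂ).re)))
    intro η
    have h1 := hsq u η
    have h2 : ‖⟪(u : h), M η⟫_ℂ‖ ≤ Real.sqrt (-(2 * (⟪(u : h), K u⟫_ℂ).re)) * ‖(η : K2)‖ := by
      have hrhs : (Real.sqrt (-(2 * (⟪(u : h), K u⟫_ℂ).re)) * ‖(η : K2)‖) ^ 2
          = (-(2 * (⟪(u : h), K u⟫_ℂ).re)) * ‖(η : K2)‖ ^ 2 := by
        rw [mul_pow, Real.sq_sqrt hBnn]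
      refine le_of_pow_le_pow_left₀ two_ne_zero (by positivity) ?_
      rw [hrhs]
      simpa using h1
    exact h2
  -- the contraction Cbar
  have hCcontr : ∀ η : Dm, ‖C η‖ ≤ 1 * ‖η‖ := by
    intro η
    have h0 := hstar 0 η
    simp only [Submodule.coe_zero, inner_zero_left, Complex.zero_re, mul_zero, zero_add,
      map_zero] at h0
    rw [one_mul]
    refine le_of_pow_le_pow_left₀ two_ne_zero (norm_nonneg _) ?_
    have he : ‖(η : K2)‖ ^ 2 = ‖η‖ ^ 2 := rfl
    linarith
  have hCbar_eq : ∀ η : Dm,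
      (LinearMap.mkContinuous C 1 hCcontr).extend Dm.subtypeL
        (η : K2) = C η := by
    intro η
    exact ContinuousLinearMap.extend_eq (LinearMap.mkContinuous C 1 hCcontr) (e := Dm.subtypeL)
      hDm.denseRange_val isUniformEmbedding_subtype_val.isUniformInducing η
  set Cbar : K2 →L[ℂ] K2 := (LinearMap.mkContinuous C 1 hCcontr).extend Dm.subtypeL
      with hCbardef
  have hCbar_norm : ‖Cbar‖ ≤ 1 := by
    have h1 : ∀ x : Dm, ‖x‖ ≤ ((1 : NNReal) : ℝ) * ‖Dm.subtypeL x‖ := by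
      intro x; simp [Submodule.subtypeL_apply]
    have h2 : ‖Cbar‖ ≤ ((1 : NNReal) : ℝ) * ‖LinearMap.mkContinuous C 1 hCcontr‖ :=
      ContinuousLinearMap.opNorm_extend_le (LinearMap.mkContinuous C 1 hCcontr) (e := Dm.subtypeL)
        hDm.denseRange_val h1
    have h3 : ‖LinearMap.mkContinuous C 1 hCcontr‖ ≤ 1 :=
      LinearMap.mkContinuous_norm_le C zero_le_one hCcontr
    simpa using h2.trans (by simpa using h3)
  -- formal adjoint identity
  have hadj : ∀ (x : (LinearPMap.adjoint (⟨Dm, M⟩ : K2 →ₗ.[ℂ] h)).domain) (y : Dm),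
      ⟪((LinearPMap.adjoint (⟨Dm, M⟩ : K2 →ₗ.[ℂ] h)) x : K2), (y : K2)⟫_ℂ
        = ⟪(x : h), M y⟫_ℂ := LinearPMap.adjoint_isFormalAdjoint hDm
  refine ⟨hmem, Cbar, hCbar_norm, hCbar_eq, ?_⟩
  intro u hu
  set w : K2 := (LinearPMap.adjoint (⟨Dm, M⟩ : K2 →ₗ.[ℂ] h)) ⟨(u : h), hu⟩ with hwdef
  have hwinner : ∀ η : Dm, ⟪w, (η : K2)⟫_ℂ = ⟪(u : h), M η⟫_ℂ := fun η => hadj ⟨(u : h), hu⟩ η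
  set g : K2 → ℝ := fun x =>
    2 * (⟪(u : h), K u⟫_ℂ).re + 2 * (⟪w, x⟫_ℂ).re + ‖L u + Cbar x‖ ^ 2 - ‖x‖ ^ 2 with hgdef
  have hgc : Continuous g := by
    have c1 : Continuous fun x : K2 => (⟪w, x⟫_ℂ).re :=
      Complex.continuous_re.comp (Continuous.inner continuous_const continuous_id)
    have c2 : Continuous fun x : K2 => ‖L u + Cbar x‖ ^ 2 :=
      ((continuous_const.add Cbar.continuous).norm).pow 2
    have c3 : Continuous fun x : K2 => ‖x‖ ^ 2 := continuous_norm.pow 2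
    exact ((continuous_const.add (continuous_const.mul c1)).add c2).sub c3
  have hg_on : ∀ η : Dm, g (η : K2) ≤ 0 := by
    intro η
    have h0 := hstar u η
    have h1 : g (η : K2) = 2 * (⟪(u : h), K u⟫_ℂ).re + 2 * (⟪(u : h), M η⟫_ℂ).re
        + ‖L u + C η‖ ^ 2 - ‖(η : K2)‖ ^ 2 := by
      simp only [hgdef]
      rw [hwinner η, hCbar_eq η]
    rw [h1]; exact h0
  have hgle : ∀ x : K2, g x ≤ 0 := by
    intro x
    have hclosed : IsClosed {y : K2 | g y ≤ 0} := isClosed_le hgc continuous_const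
    have hsub : (Dm : Set K2) ⊆ {y : K2 | g y ≤ 0} := fun y hy => hg_on ⟨y, hy⟩
    exact hclosed.closure_subset_iff.mpr hsub (by rw [hDm.closure_eq]; exact Set.mem_univ x)
  set v : K2 := L u + Cbar w with hvdef
  have hkey := hgle (w + ContinuousLinearMap.adjoint Cbar v)
  have e1 : (⟪w, w + ContinuousLinearMap.adjoint Cbar v⟫_ℂ).re
      = ‖w‖ ^ 2 + (⟪Cbar w, v⟫_ℂ).re := by
    rw [inner_add_right, Complex.add_re, ContinuousLinearMap.adjoint_inner_right]
    congr 1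
    simpa using @inner_self_eq_norm_sq ℂ K2 _ _ _ w
  have e2 : L u + Cbar (w + ContinuousLinearMap.adjoint Cbar v)
      = v + Cbar (ContinuousLinearMap.adjoint Cbar v) := by
    rw [map_add, ← add_assoc, ← hvdef]
  have e3 : ‖v + Cbar (ContinuousLinearMap.adjoint Cbar v)‖ ^ 2
      = ‖v‖ ^ 2 + 2 * (⟪v, Cbar (ContinuousLinearMap.adjoint Cbar v)⟫_ℂ).re
        + ‖Cbar (ContinuousLinearMap.adjoint Cbar v)‖ ^ 2 := by
    simpa using @norm_add_sq ℂ K2 _ _ _ v (Cbar (ContinuousLinearMap.adjoint Cbar v))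
  have e4 : (⟪v, Cbar (ContinuousLinearMap.adjoint Cbar v)⟫_ℂ).re
      = ‖ContinuousLinearMap.adjoint Cbar v‖ ^ 2 := by
    rw [← ContinuousLinearMap.adjoint_inner_left]
    simpa using @inner_self_eq_norm_sq ℂ K2 _ _ _ (ContinuousLinearMap.adjoint Cbar v)
  have e5 : ‖w + ContinuousLinearMap.adjoint Cbar v‖ ^ 2
      = ‖w‖ ^ 2 + 2 * (⟪Cbar w, v⟫_ℂ).re + ‖ContinuousLinearMap.adjoint Cbar v‖ ^ 2 := by
    have hns := @norm_add_sq ℂ K2 _ _ _ w (ContinuousLinearMap.adjoint Cbar v)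
    rw [ContinuousLinearMap.adjoint_inner_right] at hns
    simpa using hns
  have hmain2 : 2 * (⟪(u : h), K u⟫_ℂ).re + ‖w‖ ^ 2 + ‖v‖ ^ 2
      + ‖ContinuousLinearMap.adjoint Cbar v‖ ^ 2
      + ‖Cbar (ContinuousLinearMap.adjoint Cbar v)‖ ^ 2 ≤ 0 := by
    simp only [hgdef] at hkey
    rw [e1, e2, e3, e4, e5] at hkey
    linarith
  constructor
  · linarith [hmain2, sq_nonneg ‖ContinuousLinearMap.adjoint Cbar v‖,
      sq_nonneg ‖Cbar (ContinuousLinearMap.adjoint Cbar v)‖]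
  · intro lam hlam
    have hwsq : ‖w‖ ^ 2 ≤ 2 * ‖(u : h)‖ * ‖K u‖ := by
      have h1 : |(⟪(u : h), K u⟫_ℂ).re| ≤ ‖⟪(u : h), K u⟫_ℂ‖ := by
        exact Complex.abs_re_le_norm _
      have h2 : ‖⟪(u : h), K u⟫_ℂ‖ ≤ ‖(u : h)‖ * ‖K u‖ := norm_inner_le_norm _ _
      have h3 := neg_abs_le ((⟪(u : h), K u⟫_ℂ).re)
      nlinarith [hmain2, sq_nonneg ‖v‖, sq_nonneg ‖ContinuousLinearMap.adjoint Cbar v‖,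
        sq_nonneg ‖Cbar (ContinuousLinearMap.adjoint Cbar v)‖]
    have hl : lam ≠ 0 := ne_of_gt hlam
    have hinv : lam * lam⁻¹ = 1 := mul_inv_cancel₀ hl
    refine le_of_pow_le_pow_left₀ two_ne_zero
      (add_nonneg (mul_nonneg hlam.le (norm_nonneg _))
        (mul_nonneg (inv_nonneg.mpr hlam.le) (norm_nonneg _))) ?_
    have hexp : (lam * ‖K u‖ + lam⁻¹ * ‖(u : h)‖) ^ 2
        = lam ^ 2 * ‖K u‖ ^ 2 + 2 * (lam * lam⁻¹) * (‖K u‖ * ‖(u : h)‖)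
          + (lam⁻¹) ^ 2 * ‖(u : h)‖ ^ 2 := by ring
    rw [hexp, hinv]
    nlinarith [sq_nonneg (lam * ‖K u‖), sq_nonneg (lam⁻¹ * ‖(u : h)‖), hwsq]
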